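/- Let C be a 2-category and W a class of 1-morphisms satisfying (BF1)–(BF5). Fix 1-morphisms w¹ : A¹ → A, w² : A² → A, z : A → A' with z, z ∘ w¹, z ∘ w² ∈ W. Suppose given two diagrams: (p : E → A¹, q : E → A², ς : z ∘ w¹ ∘ p ⇒ z ∘ w² ∘ q invertible) and (r : F → A¹, s : F → A², η : z ∘ w¹ ∘ r ⇒ z ∘ w² ∘ s invertible), with z ∘ w¹ ∘ p and z ∘ w¹ ∘ r in W. Then there exist objects G and A³, morphisms t¹ : G → E with p ∘ t¹ ∈ W, t² : G → F, t³ : A³ → G in W, and invertible 2-morphisms ε : p ∘ t¹ ⇒ r ∘ t² and κ : s ∘ t² ∘ t³ ⇒ q ∘ t¹ ∘ t³, such that ς ▷ (t¹ ∘ t³) equals the pasting of κ, ε and η, namely the composite (w² ◁ κ whiskered appropriately) ∘ (η ▷ (t² ∘ t³)) ∘ (w¹ ◁ ε ▷ t³) from w¹ ∘ p ∘ t¹ ∘ t³ to w² ∘ q ∘ t¹ ∘ t³ (all composed with z). -/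

import Mathlib

open CategoryTheory CategoryTheory.Bicategory

universe w v u


/-- Pronk's axioms (BF1)–(BF5) for a right bicalculus of fractions on a class `W`
of 1-morphisms of a bicategory. -/
structure PronkBF {B : Type u} [Bicategory.{w, v} B]
    (W : ∀ ⦃X Y : B⦄, (X ⟶ Y) → Prop) : Prop where
  bf1 : ∀ X : B, W (𝟙 X)
  bf2 : ∀ {X Y Z : B} (f : X ⟶ Y) (g : Y ⟶ Z), W f → W g → W (f ≫ g)
  bf3 : ∀ {X Y Z : B} (wm : X ⟶ Y) (f : Z ⟶ Y), W wm →
      ∃ (D : B) (w' : D ⟶ Z) (f' : D ⟶ X), W w' ∧ Nonempty (w' ≫ f ≅ f' ≫ wm)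
  bf4a : ∀ {X Y Z : B} (wm : Y ⟶ X) (f₁ f₂ : Z ⟶ Y) (α : f₁ ≫ wm ⟶ f₂ ≫ wm), W wm →
      ∃ (D : B) (vm : D ⟶ Z) (β : vm ≫ f₁ ⟶ vm ≫ f₂), W vm ∧
        vm ◁ α = (α_ vm f₁ wm).inv ≫ β ▷ wm ≫ (α_ vm f₂ wm).hom
  bf4b : ∀ {X Y Z : B} (wm : Y ⟶ X) (f₁ f₂ : Z ⟶ Y) (α : f₁ ≫ wm ⟶ f₂ ≫ wm), W wm → IsIso α →
      ∃ (D : B) (vm : D ⟶ Z) (β : vm ≫ f₁ ⟶ vm ≫ f₂), W vm ∧ IsIso β ∧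
        vm ◁ α = (α_ vm f₁ wm).inv ≫ β ▷ wm ≫ (α_ vm f₂ wm).hom
  bf4c : ∀ {X Y Z : B} (wm : Y ⟶ X) (f₁ f₂ : Z ⟶ Y) (α : f₁ ≫ wm ⟶ f₂ ≫ wm)
      {D D' : B} (vm : D ⟶ Z) (β : vm ≫ f₁ ⟶ vm ≫ f₂)
      (vm' : D' ⟶ Z) (β' : vm' ≫ f₁ ⟶ vm' ≫ f₂),
      W wm → W vm → W vm' →
      (vm ◁ α = (α_ vm f₁ wm).inv ≫ β ▷ wm ≫ (α_ vm f₂ wm).hom) →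
      (vm' ◁ α = (α_ vm' f₁ wm).inv ≫ β' ▷ wm ≫ (α_ vm' f₂ wm).hom) →
      ∃ (E : B) (um : E ⟶ D) (um' : E ⟶ D') (ζ : um ≫ vm ≅ um' ≫ vm'),
        W (um ≫ vm) ∧
        ζ.hom ▷ f₁ ≫ (α_ um' vm' f₁).hom ≫ um' ◁ β' ≫ (α_ um' vm' f₂).inv
          = (α_ um vm f₁).hom ≫ um ◁ β ≫ (α_ um vm f₂).inv ≫ ζ.hom ▷ f₂
  bf5 : ∀ {X Y : B} (vm wm : X ⟶ Y), W wm → Nonempty (vm ≅ wm) → W vm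
private theorem wlCancel {B : Type u} [Bicategory.{w, v} B] {a b c : B}
    (f : a ⟶ b) {g h : b ⟶ c} (x : g ⟶ h) (y : h ⟶ g) (hxy : x ≫ y = 𝟙 g)
    {k : a ⟶ c} (rest : f ≫ g ⟶ k) :
    f ◁ x ≫ f ◁ y ≫ rest = rest := by
  rw [← Category.assoc, ← Bicategory.whiskerLeft_comp, hxy]
  simp

/-- Lemma lem-04: any two invertible fillers `(E, p, q, ς)` and
`(F, r, s, η)` for the cospan `(z ∘ w¹, z ∘ w²)` admit a common refinement `(G, A³, t¹, t², t³)`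
with invertible comparison 2-cells `ε` and `κ`, compatible with `ς` and `η`. -/
theorem statement5 {B : Type u} [Bicategory.{w, v} B] [Bicategory.Strict B]
    (W : ∀ ⦃X Y : B⦄, (X ⟶ Y) → Prop) (hBF : PronkBF W)
    {A A' A₁ A₂ E F : B}
    (w₁ : A₁ ⟶ A) (w₂ : A₂ ⟶ A) (z : A ⟶ A')
    (hz : W z) (hzw₁ : W (w₁ ≫ z)) (hzw₂ : W (w₂ ≫ z))
    (p : E ⟶ A₁) (q : E ⟶ A₂) (r : F ⟶ A₁) (s : F ⟶ A₂)
    (hp : W ((p ≫ w₁) ≫ z)) (hr : W ((r ≫ w₁) ≫ z))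
    (ς : (p ≫ w₁) ≫ z ≅ (q ≫ w₂) ≫ z) (η : (r ≫ w₁) ≫ z ≅ (s ≫ w₂) ≫ z) :
    ∃ (G A₃ : B) (t₁ : G ⟶ E) (t₂ : G ⟶ F) (t₃ : A₃ ⟶ G)
      (ε' : t₁ ≫ p ≅ t₂ ≫ r) (κ : t₃ ≫ t₂ ≫ s ≅ t₃ ≫ t₁ ≫ q),
      W (t₁ ≫ p) ∧ W t₃ ∧
      (t₃ ≫ t₁) ◁ ς.hom =
        eqToHom (by simp) ≫ (t₃ ◁ ε'.hom) ▷ (w₁ ≫ z) ≫ eqToHom (by simp) ≫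
          (t₃ ≫ t₂) ◁ η.hom ≫ eqToHom (by simp) ≫ κ.hom ▷ (w₂ ≫ z) ≫
          eqToHom (by simp) := by
  -- Step A: find `a : D₁ ⟶ E` with `W (a ≫ p)`.
  obtain ⟨D₀, a₀, a₁, ha₀, ⟨ι⟩⟩ := hBF.bf3 ((p ≫ w₁) ≫ z) (w₁ ≫ z) hp
  obtain ⟨D₁, v₁, β₁, hv₁, hβ₁, -⟩ :=
    hBF.bf4b (w₁ ≫ z) a₀ (a₁ ≫ p) (ι.hom ≫ eqToHom (by simp)) hzw₁ inferInstance
  haveI := hβ₁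
  have hap : W ((v₁ ≫ a₁) ≫ p) := by
    have h2 : W (v₁ ≫ a₁ ≫ p) :=
      hBF.bf5 _ _ (hBF.bf2 _ _ hv₁ ha₀) ⟨(asIso β₁).symm⟩
    rw [Category.assoc]; exact h2
  set a : D₁ ⟶ E := v₁ ≫ a₁ with ha
  -- Step B: complete the square against `(r ≫ w₁) ≫ z`.
  obtain ⟨D₂, b, c, hb, ⟨ι₂⟩⟩ := hBF.bf3 ((r ≫ w₁) ≫ z) (a ≫ (p ≫ w₁) ≫ z) hr
  -- Step C: divide by `w₁ ≫ z` to get β, hence ε.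
  obtain ⟨G, v, β, hv, hβ, -⟩ :=
    hBF.bf4b (w₁ ≫ z) ((b ≫ a) ≫ p) (c ≫ r)
      (eqToHom (by simp) ≫ ι₂.hom ≫ eqToHom (by simp)) hzw₁ inferInstance
  haveI := hβ
  have hε₁ : (v ≫ b ≫ a) ≫ p = v ≫ (b ≫ a) ≫ p := by simp
  have hε₂ : v ≫ c ≫ r = (v ≫ c) ≫ r := by simp
  have hWt₁p : W ((v ≫ b ≫ a) ≫ p) := by
    have h : W (v ≫ b ≫ a ≫ p) := hBF.bf2 _ _ hv (hBF.bf2 _ _ hb hap)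
    simpa using h
  -- Step D/E: construct γ and divide by `w₂ ≫ z` to get κ.
  obtain ⟨A₃, t₃, κ₀, ht₃, hκ, hcomp₂⟩ :=
    hBF.bf4b (w₂ ≫ z) ((v ≫ c) ≫ s) ((v ≫ b ≫ a) ≫ q)
      (eqToHom (by simp) ≫ (v ≫ c) ◁ η.inv ≫ eqToHom (by simp) ≫
        ((eqToHom hε₂.symm ≫ inv β ≫ eqToHom hε₁.symm) ▷ (w₁ ≫ z)) ≫ eqToHom (by simp) ≫
        (v ≫ b ≫ a) ◁ ς.hom ≫ eqToHom (by simp)) hzw₂ inferInstance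
  haveI := hκ
  refine ⟨G, A₃, v ≫ b ≫ a, v ≫ c, t₃,
    eqToIso hε₁ ≪≫ asIso β ≪≫ eqToIso hε₂, asIso κ₀, hWt₁p, ht₃, ?_⟩
  have hκeq : κ₀ ▷ (w₂ ≫ z) =
      (α_ t₃ ((v ≫ c) ≫ s) (w₂ ≫ z)).hom ≫
        t₃ ◁ (eqToHom (by simp) ≫ (v ≫ c) ◁ η.inv ≫ eqToHom (by simp) ≫
          ((eqToHom hε₂.symm ≫ inv β ≫ eqToHom hε₁.symm) ▷ (w₁ ≫ z)) ≫ eqToHom (by simp) ≫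
          (v ≫ b ≫ a) ◁ ς.hom ≫ eqToHom (by simp)) ≫
        (α_ t₃ ((v ≫ b ≫ a) ≫ q) (w₂ ≫ z)).inv := by
    rw [hcomp₂]; simp
  simp only [asIso_hom]
  rw [hκeq]
  simp [Bicategory.Strict.associator_eqToIso, Bicategory.comp_whiskerLeft,
    Bicategory.whisker_assoc, Bicategory.whiskerLeft_comp, Bicategory.comp_whiskerRight,
    eqToHom_trans, eqToHom_trans_assoc]
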